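/- Expectation of T₂ under homoscedasticity: let X be an n×p real matrix of full column rank p < n, let P := I_n − X(XᵀX)⁻¹Xᵀ, and let ε₁,…,εₙ be i.i.d. real random variables with distribution symmetric about 0, E ε₁² = 1 and M₄ := E ε₁⁴ < ∞. With residuals ε̂ := Pε, E[ n⁻¹·(Σ_{i=1}^n ε̂ᵢ²)² ] = n⁻¹·( (n−p)² + 2(n−p) + ν₄·tr(P∘P) ), where ν₄ := M₄ − 3. -/

import Mathlib

open MeasureTheory ProbabilityTheory Matrix
open scoped Matrix

lemma aux_int_pow {Ω : Type*} [MeasurableSpace Ω] {μ : Measure Ω} [IsProbabilityMeasure μ]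
    {f : Ω → ℝ} (hm : Measurable f) (h4 : Integrable (fun ω => f ω ^ 4) μ)
    {k : ℕ} (hk : k ≤ 4) : Integrable (fun ω => f ω ^ k) μ := by
  refine ((integrable_const (1:ℝ)).add h4).mono'
    ((hm.pow_const k).aestronglyMeasurable) (Filter.Eventually.of_forall fun ω => ?_)
  have h0 : (0:ℝ) ≤ f ω ^ 4 := by positivity
  rcases le_or_gt (|f ω|) 1 with h | h
  · have : |f ω| ^ k ≤ 1 := pow_le_one₀ (abs_nonneg _) h
    calc ‖f ω ^ k‖ = |f ω| ^ k := by rw [Real.norm_eq_abs, abs_pow]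
    _ ≤ 1 := this
    _ ≤ 1 + f ω ^ 4 := by linarith
  · have h1 : |f ω| ^ k ≤ |f ω| ^ 4 := pow_le_pow_right₀ h.le hk
    have h2 : |f ω| ^ 4 = f ω ^ 4 := by
      rw [← abs_pow, abs_of_nonneg h0]
    calc ‖f ω ^ k‖ = |f ω| ^ k := by rw [Real.norm_eq_abs, abs_pow]
    _ ≤ f ω ^ 4 := by rw [← h2] at *; linarith
    _ ≤ 1 + f ω ^ 4 := by linarith

lemma aux_odd_moment {Ω : Type*} [MeasurableSpace Ω] {μ : Measure Ω}
    {f : Ω → ℝ} (hm : Measurable f) (hsymm : μ.map f = μ.map (fun ω => -f ω))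
    {k : ℕ} (hk : Odd k) : ∫ ω, f ω ^ k ∂μ = 0 := by
  have h1 : ∫ ω, f ω ^ k ∂μ = ∫ x, x ^ k ∂(μ.map f) :=
    (integral_map hm.aemeasurable ((measurable_id.pow_const k).aestronglyMeasurable)).symm
  have h2 : ∫ x, x ^ k ∂(μ.map (fun ω => -f ω)) = ∫ ω, (-f ω) ^ k ∂μ :=
    integral_map (hm.neg).aemeasurable ((measurable_id.pow_const k).aestronglyMeasurable)
  have h3 : ∫ ω, (-f ω) ^ k ∂μ = - ∫ ω, f ω ^ k ∂μ := by
    simp_rw [hk.neg_pow]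
    exact integral_neg _
  have := h1.trans (by rw [hsymm, h2, h3])
  linarith

lemma aux_prod_integral {Ω : Type*} [MeasurableSpace Ω] {μ : Measure Ω} [IsProbabilityMeasure μ]
    {n : ℕ} (g : Fin n → Ω → ℝ)
    (hind : iIndepFun g μ)
    (hm : ∀ i, Measurable (g i)) (hi : ∀ i, Integrable (g i) μ)
    (s : Finset (Fin n)) :
    Integrable (fun ω => ∏ i ∈ s, g i ω) μ ∧
      ∫ ω, ∏ i ∈ s, g i ω ∂μ = ∏ i ∈ s, ∫ ω, g i ω ∂μ := by
  classical
  induction s using Finset.induction_on with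
  | empty => simp
  | @insert i s hnot ih =>
    have hIF : IndepFun (∏ j ∈ s, g j) (g i) μ :=
      iIndepFun.indepFun_finset_prod_of_notMem hind hm hnot
    have hps : (∏ j ∈ s, g j) = fun ω => ∏ j ∈ s, g j ω := by
      funext ω; simp
    rw [hps] at hIF
    have hint : Integrable (fun ω => (∏ j ∈ s, g j ω) * g i ω) μ :=
      hIF.integrable_mul ih.1 (hi i)
    constructor
    · simp_rw [Finset.prod_insert hnot]
      refine hint.congr (Filter.Eventually.of_forall fun ω => ?_)
      ring
    · have h1 : ∫ ω, (∏ j ∈ s, g j ω) * g i ω ∂μ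
          = (∫ ω, ∏ j ∈ s, g j ω ∂μ) * ∫ ω, g i ω ∂μ :=
        hIF.integral_fun_mul_eq_mul_integral ih.1.aestronglyMeasurable (hi i).aestronglyMeasurable
      simp_rw [Finset.prod_insert hnot]
      have h2 : ∀ ω, g i ω * ∏ j ∈ s, g j ω = (∏ j ∈ s, g j ω) * g i ω := fun ω => by ring
      simp_rw [h2, h1, ih.2]
      ring

noncomputable def mo4 (M4 : ℝ) : ℕ → ℝ := fun k =>
  if k = 0 then 1 else if k = 2 then 1 else if k = 4 then M4 else 0

lemma prod_mo_eval {n : ℕ} (M4 : ℝ) (a b c d : Fin n) :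
    (∏ i, mo4 M4 ((if a = i then 1 else 0) + (if b = i then 1 else 0)
        + (if c = i then 1 else 0) + (if d = i then 1 else 0)))
    = (if a = b then (1:ℝ) else 0) * (if c = d then 1 else 0)
      + (if a = c then (1:ℝ) else 0) * (if b = d then 1 else 0)
      + (if a = d then (1:ℝ) else 0) * (if b = c then 1 else 0)
      + (M4 - 3) * ((if a = b then (1:ℝ) else 0) * (if a = c then 1 else 0)
          * (if a = d then 1 else 0)) := by
  rcases eq_or_ne a b with rfl | hab
  · rcases eq_or_ne a c with rfl | hac
    · rcases eq_or_ne a d with rfl | had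
      · -- all equal
        rw [Finset.prod_eq_single a (fun i _ hia => by simp [mo4, Ne.symm hia])
          (by simp)]
        simp [mo4]; ring
      · -- (a,a,a,d), a ≠ d : odd index d
        rw [Finset.prod_eq_zero (Finset.mem_univ d) (by simp [mo4, had])]
        simp [had]
    · rcases eq_or_ne c d with rfl | hcd
      · -- pair (a,a,c,c), a ≠ c
        rw [Finset.prod_eq_one (fun i _ => by
          by_cases h1 : a = i <;> by_cases h2 : c = i <;>
            simp_all [mo4])]
        simp [hac]
      · rcases eq_or_ne a d with rfl | had
        · -- (a,a,c,a), a ≠ c : odd index c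
          rw [Finset.prod_eq_zero (Finset.mem_univ c) (by simp [mo4, hac])]
          simp [hac, Ne.symm hac]
        · -- (a,a,c,d) distinct-ish : odd index c
          rw [Finset.prod_eq_zero (Finset.mem_univ c)
            (by simp [mo4, hac, Ne.symm hcd])]
          simp [hac, hcd]
  · rcases eq_or_ne a c with rfl | hac
    · rcases eq_or_ne b d with rfl | hbd
      · -- pair (a,b,a,b), a ≠ b
        rw [Finset.prod_eq_one (fun i _ => by
          by_cases h1 : a = i <;> by_cases h2 : b = i <;>
            simp_all [mo4])]
        simp [hab, Ne.symm hab]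
      · rcases eq_or_ne a d with rfl | had
        · -- (a,b,a,a), a ≠ b : odd index b
          rw [Finset.prod_eq_zero (Finset.mem_univ b) (by simp [mo4, hab])]
          simp [hab, Ne.symm hab]
        · -- (a,b,a,d), odd index d
          rw [Finset.prod_eq_zero (Finset.mem_univ d)
            (by simp [mo4, had, hbd])]
          simp [had, hbd, Ne.symm hab]
    · rcases eq_or_ne a d with rfl | had
      · rcases eq_or_ne b c with rfl | hbc
        · -- pair (a,b,b,a), a ≠ b
          rw [Finset.prod_eq_one (fun i _ => by
            by_cases h1 : a = i <;> by_cases h2 : b = i <;>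
              simp_all [mo4])]
          simp [hab, Ne.symm hab]
        · -- (a,b,c,a) : odd index b
          rw [Finset.prod_eq_zero (Finset.mem_univ b)
            (by simp [mo4, hab, Ne.symm hbc])]
          simp [hab, hac, hbc, Ne.symm hab]
      · -- a distinct from b, c, d : odd index a
        rw [Finset.prod_eq_zero (Finset.mem_univ a)
          (by simp [mo4, Ne.symm hab, Ne.symm hac, Ne.symm had])]
        simp [hab, hac, had]

/-- Expectation of `T₂ = n⁻¹(Σᵢ ε̂ᵢ²)²` under homoscedasticity: with `P = I − X(XᵀX)⁻¹Xᵀ` the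
hat matrix of a full-column-rank design `X` and residuals `ε̂ = Pε`,
`E[n⁻¹(Σᵢ ε̂ᵢ²)²] = n⁻¹((n−p)² + 2(n−p) + ν₄·tr(P∘P))` where `ν₄ = M₄ − 3`. -/
theorem expectation_T2_homoscedastic
    {Ω : Type*} [MeasurableSpace Ω] (μ : Measure Ω) [IsProbabilityMeasure μ]
    {n p : ℕ} (hpn : p < n)
    (X : Matrix (Fin n) (Fin p) ℝ) (hrank : X.rank = p)
    (P : Matrix (Fin n) (Fin n) ℝ) (hP : P = 1 - X * (Xᵀ * X)⁻¹ * Xᵀ)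
    (ε : Fin n → Ω → ℝ)
    (hmeas : ∀ i, Measurable (ε i))
    (hindep : iIndepFun ε μ)
    (hident : ∀ i j, μ.map (ε i) = μ.map (ε j))
    (hsymm : ∀ i, μ.map (ε i) = μ.map (fun ω => -ε i ω))
    (hvar : ∀ i, ∫ ω, (ε i ω) ^ 2 ∂μ = 1)
    (hint4 : ∀ i, Integrable (fun ω => (ε i ω) ^ 4) μ)
    (M4 ν4 : ℝ)
    (hM4 : ∀ i, ∫ ω, (ε i ω) ^ 4 ∂μ = M4)
    (hν4 : ν4 = M4 - 3)
    (εhat : Fin n → Ω → ℝ)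
    (hεhat : ∀ i ω, εhat i ω = ∑ j, P i j * ε j ω) :
    (∫ ω, (1 / (n : ℝ)) * (∑ i, εhat i ω ^ 2) ^ 2 ∂μ)
      = (1 / (n : ℝ)) * (((n : ℝ) - p) ^ 2 + 2 * ((n : ℝ) - p)
          + ν4 * (P ⊙ P).trace) := by
  classical
  -- ### Matrix facts
  have hker : LinearMap.ker X.mulVecLin = ⊥ := by
    have h := LinearMap.finrank_range_add_finrank_ker X.mulVecLin
    rw [Matrix.rank] at hrank
    rw [hrank, Module.finrank_fintype_fun_eq_card, Fintype.card_fin] at h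
    exact Submodule.finrank_eq_zero.mp (by omega)
  have hU : IsUnit (Xᵀ * X) := by
    rw [← Matrix.mulVec_injective_iff_isUnit]
    have hk2 : LinearMap.ker (Xᵀ * X).mulVecLin = ⊥ := by
      rw [Matrix.ker_mulVecLin_transpose_mul_self]; exact hker
    intro v w hvw
    exact LinearMap.ker_eq_bot.mp hk2 hvw
  have hdet : IsUnit (Xᵀ * X).det := (Matrix.isUnit_iff_isUnit_det _).mp hU
  have hGl : (Xᵀ * X)⁻¹ * (Xᵀ * X) = 1 := Matrix.nonsing_inv_mul _ hdet
  have hGr : (Xᵀ * X) * (Xᵀ * X)⁻¹ = 1 := Matrix.mul_nonsing_inv _ hdet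
  have hsym : Pᵀ = P := by
    rw [hP]
    simp [transpose_sub, transpose_mul, Matrix.transpose_nonsing_inv, Matrix.mul_assoc]
  have hHH : (X * (Xᵀ * X)⁻¹ * Xᵀ) * (X * (Xᵀ * X)⁻¹ * Xᵀ) = X * (Xᵀ * X)⁻¹ * Xᵀ := by
    simp only [Matrix.mul_assoc]
    rw [show Xᵀ * (X * ((Xᵀ * X)⁻¹ * Xᵀ)) = (Xᵀ * X) * ((Xᵀ * X)⁻¹ * Xᵀ) by
      rw [Matrix.mul_assoc], ← Matrix.mul_assoc ((Xᵀ * X)⁻¹), hGl, Matrix.one_mul]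
  have hidem : P * P = P := by
    rw [hP, Matrix.sub_mul, Matrix.mul_sub, Matrix.mul_sub, Matrix.one_mul,
      Matrix.mul_one, hHH]
    simp
  have htr : P.trace = (n : ℝ) - p := by
    rw [hP, Matrix.trace_sub, Matrix.trace_one]
    rw [Matrix.trace_mul_cycle, hGr, Matrix.trace_one]
    simp
  have hs : ∀ i j, P i j = P j i := fun i j => by
    conv_lhs => rw [← hsym]
    exact Matrix.transpose_apply P i j
  have hPP : ∀ j k, (∑ i, P i j * P i k) = P j k := by
    intro j k
    have h1 : (P * P) j k = P j k := by rw [hidem]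
    rw [Matrix.mul_apply] at h1
    calc ∑ i, P i j * P i k = ∑ i, P j i * P i k :=
          Finset.sum_congr rfl fun i _ => by rw [hs i j]
    _ = P j k := h1
  have htrdiag : (∑ j, P j j) = (n : ℝ) - p := by
    simpa [Matrix.trace, Matrix.diag] using htr
  have htrPP : (∑ j, ∑ k, P j k * P k j) = (n : ℝ) - p := by
    calc ∑ j, ∑ k, P j k * P k j = (P * P).trace := by
          simp [Matrix.trace, Matrix.diag, Matrix.mul_apply]
    _ = P.trace := by rw [hidem]
    _ = (n : ℝ) - p := htr
  have hhad : (P ⊙ P).trace = ∑ j, P j j * P j j := by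
    simp [Matrix.trace, Matrix.diag, Matrix.hadamard_apply]
  -- ### Moments
  have hintk : ∀ (i : Fin n) (k : ℕ), k ≤ 4 → Integrable (fun ω => ε i ω ^ k) μ :=
    fun i k hk => aux_int_pow (hmeas i) (hint4 i) hk
  have hmom : ∀ (i : Fin n) (k : ℕ), k ≤ 4 → ∫ ω, ε i ω ^ k ∂μ = mo4 M4 k := by
    intro i k hk
    interval_cases k
    · simp [mo4]
    · rw [show mo4 M4 1 = 0 by simp [mo4]]
      simpa using aux_odd_moment (hmeas i) (hsymm i) odd_one
    · simpa [mo4] using hvar i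
    · rw [show mo4 M4 3 = 0 by simp [mo4]]
      exact aux_odd_moment (hmeas i) (hsymm i) (by decide)
    · simpa [mo4] using hM4 i
  have key : ∀ (c : Fin n → ℕ), (∀ i, c i ≤ 4) →
      Integrable (fun ω => ∏ i, ε i ω ^ c i) μ ∧
        ∫ ω, ∏ i, ε i ω ^ c i ∂μ = ∏ i, mo4 M4 (c i) := by
    intro c hc
    have hind' : iIndepFun (fun i ω => ε i ω ^ c i) μ :=
      hindep.comp (fun i x => x ^ c i) (fun i => measurable_id.pow_const (c i))
    obtain ⟨h1, h2⟩ := aux_prod_integral (fun i ω => ε i ω ^ c i) hind'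
      (fun i => (hmeas i).pow_const (c i)) (fun i => hintk i (c i) (hc i)) Finset.univ
    exact ⟨h1, h2.trans (Finset.prod_congr rfl fun i _ => hmom i (c i) (hc i))⟩
  have hcle : ∀ (a b c d i : Fin n),
      ((if a = i then 1 else 0) + (if b = i then 1 else 0)
        + (if c = i then 1 else 0) + (if d = i then 1 else 0) : ℕ) ≤ 4 := by
    intro a b c d i
    split_ifs <;> omega
  have hmult : ∀ (a b c d : Fin n) (ω : Ω), ε a ω * ε b ω * ε c ω * ε d ω
      = ∏ i, ε i ω ^ ((if a = i then 1 else 0) + (if b = i then 1 else 0)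
          + (if c = i then 1 else 0) + (if d = i then 1 else 0)) := by
    intro a b c d ω
    have h1 : ∀ a : Fin n, (∏ i, ε i ω ^ (if a = i then 1 else 0)) = ε a ω := by
      intro a
      simp [pow_ite, Finset.prod_ite_eq]
    simp only [pow_add, Finset.prod_mul_distrib, h1]
  have hquadint : ∀ a b c d : Fin n,
      Integrable (fun ω => ε a ω * ε b ω * ε c ω * ε d ω) μ := by
    intro a b c d
    exact ((key _ (hcle a b c d)).1).congr
      (Filter.Eventually.of_forall fun ω => (hmult a b c d ω).symm)
  have E4 : ∀ a b c d : Fin n, ∫ ω, ε a ω * ε b ω * ε c ω * ε d ω ∂μ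
      = (if a = b then (1:ℝ) else 0) * (if c = d then 1 else 0)
        + (if a = c then (1:ℝ) else 0) * (if b = d then 1 else 0)
        + (if a = d then (1:ℝ) else 0) * (if b = c then 1 else 0)
        + ν4 * ((if a = b then (1:ℝ) else 0) * (if a = c then 1 else 0)
            * (if a = d then 1 else 0)) := by
    intro a b c d
    rw [hν4]
    simp_rw [hmult a b c d]
    rw [(key _ (hcle a b c d)).2, prod_mo_eval]
  -- ### expansion of the statistic
  have hhat2 : ∀ ω, (∑ i, εhat i ω ^ 2)
      = ∑ j, ∑ k, P j k * (ε j ω * ε k ω) := by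
    intro ω
    calc ∑ i, εhat i ω ^ 2
        = ∑ i, (∑ j, P i j * ε j ω) * (∑ k, P i k * ε k ω) := by
          simp_rw [hεhat, sq]
      _ = ∑ i, ∑ j, ∑ k, (P i j * P i k) * (ε j ω * ε k ω) := by
          refine Finset.sum_congr rfl fun i _ => ?_
          rw [Finset.sum_mul_sum]
          exact Finset.sum_congr rfl fun j _ => Finset.sum_congr rfl fun k _ => by ring
      _ = ∑ j, ∑ k, ∑ i, (P i j * P i k) * (ε j ω * ε k ω) := by
          rw [Finset.sum_comm]
          exact Finset.sum_congr rfl fun j _ => Finset.sum_comm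
      _ = ∑ j, ∑ k, P j k * (ε j ω * ε k ω) := by
          refine Finset.sum_congr rfl fun j _ => Finset.sum_congr rfl fun k _ => ?_
          rw [← Finset.sum_mul, hPP]
  have hsq : ∀ ω, (∑ i, εhat i ω ^ 2) ^ 2
      = ∑ j, ∑ k, ∑ l, ∑ m, (P j k * P l m)
          * (ε j ω * ε k ω * ε l ω * ε m ω) := by
    intro ω
    rw [hhat2, sq, Finset.sum_mul_sum]
    calc ∑ j, ∑ l, (∑ k, P j k * (ε j ω * ε k ω)) * (∑ m, P l m * (ε l ω * ε m ω))
        = ∑ j, ∑ l, ∑ k, ∑ m, (P j k * P l m) * (ε j ω * ε k ω * ε l ω * ε m ω) := by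
          refine Finset.sum_congr rfl fun j _ => Finset.sum_congr rfl fun l _ => ?_
          rw [Finset.sum_mul_sum]
          exact Finset.sum_congr rfl fun k _ => Finset.sum_congr rfl fun m _ => by ring
      _ = ∑ j, ∑ k, ∑ l, ∑ m, (P j k * P l m) * (ε j ω * ε k ω * ε l ω * ε m ω) :=
          Finset.sum_congr rfl fun j _ => Finset.sum_comm
  -- integrability of the nested sums
  have hint3 : ∀ j k l, Integrable
      (fun ω => ∑ m, (P j k * P l m) * (ε j ω * ε k ω * ε l ω * ε m ω)) μ :=
    fun j k l => integrable_finset_sum _ fun m _ => (hquadint j k l m).const_mul _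
  have hint2 : ∀ j k, Integrable
      (fun ω => ∑ l, ∑ m, (P j k * P l m) * (ε j ω * ε k ω * ε l ω * ε m ω)) μ :=
    fun j k => integrable_finset_sum _ fun l _ => hint3 j k l
  have hint1 : ∀ j, Integrable
      (fun ω => ∑ k, ∑ l, ∑ m, (P j k * P l m) * (ε j ω * ε k ω * ε l ω * ε m ω)) μ :=
    fun j => integrable_finset_sum _ fun k _ => hint2 j k
  have hmain : ∫ ω, (∑ i, εhat i ω ^ 2) ^ 2 ∂μ
      = ∑ j, ∑ k, ∑ l, ∑ m, (P j k * P l m) *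
          ((if j = k then (1:ℝ) else 0) * (if l = m then 1 else 0)
            + (if j = l then (1:ℝ) else 0) * (if k = m then 1 else 0)
            + (if j = m then (1:ℝ) else 0) * (if k = l then 1 else 0)
            + ν4 * ((if j = k then (1:ℝ) else 0) * (if j = l then 1 else 0)
                * (if j = m then 1 else 0))) := by
    rw [show (fun ω => (∑ i, εhat i ω ^ 2) ^ 2)
        = fun ω => ∑ j, ∑ k, ∑ l, ∑ m, (P j k * P l m)
            * (ε j ω * ε k ω * ε l ω * ε m ω) from funext hsq]
    rw [integral_finset_sum _ fun j _ => hint1 j]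
    refine Finset.sum_congr rfl fun j _ => ?_
    rw [integral_finset_sum _ fun k _ => hint2 j k]
    refine Finset.sum_congr rfl fun k _ => ?_
    rw [integral_finset_sum _ fun l _ => hint3 j k l]
    refine Finset.sum_congr rfl fun l _ => ?_
    rw [integral_finset_sum _ fun m _ => (hquadint j k l m).const_mul _]
    refine Finset.sum_congr rfl fun m _ => ?_
    rw [integral_const_mul, E4]
  have hfinal : (∑ j, ∑ k, ∑ l, ∑ m, (P j k * P l m) *
          ((if j = k then (1:ℝ) else 0) * (if l = m then 1 else 0)
            + (if j = l then (1:ℝ) else 0) * (if k = m then 1 else 0)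
            + (if j = m then (1:ℝ) else 0) * (if k = l then 1 else 0)
            + ν4 * ((if j = k then (1:ℝ) else 0) * (if j = l then 1 else 0)
                * (if j = m then 1 else 0))))
      = ((n : ℝ) - p) ^ 2 + 2 * ((n : ℝ) - p) + ν4 * (P ⊙ P).trace := by
    have hsplit : ∀ j k l m : Fin n, (P j k * P l m) *
          ((if j = k then (1:ℝ) else 0) * (if l = m then 1 else 0)
            + (if j = l then (1:ℝ) else 0) * (if k = m then 1 else 0)
            + (if j = m then (1:ℝ) else 0) * (if k = l then 1 else 0)
            + ν4 * ((if j = k then (1:ℝ) else 0) * (if j = l then 1 else 0)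
                * (if j = m then 1 else 0)))
        = (if j = k then (1:ℝ) else 0) * ((if l = m then (1:ℝ) else 0) * (P j k * P l m))
          + (if j = l then (1:ℝ) else 0) * ((if k = m then (1:ℝ) else 0) * (P j k * P l m))
          + (if j = m then (1:ℝ) else 0) * ((if k = l then (1:ℝ) else 0) * (P j k * P l m))
          + (if j = k then (1:ℝ) else 0) * ((if j = l then (1:ℝ) else 0)
              * ((if j = m then (1:ℝ) else 0) * (ν4 * (P j k * P l m)))) := by
      intro j k l m; ring
    simp_rw [hsplit, Finset.sum_add_distrib]
    have c1 : ∀ (f : Fin n → ℝ) (j : Fin n),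
        (∑ k, (if j = k then (1:ℝ) else 0) * f k) = f j := by
      intro f j; simp
    simp_rw [← Finset.mul_sum, c1]
    have e1 : (∑ x : Fin n, ∑ y : Fin n, P x x * P y y) = ((n:ℝ) - p) ^ 2 := by
      rw [← Finset.sum_mul_sum, htrdiag]; ring
    have e2 : (∑ x : Fin n, ∑ y : Fin n, P x y * P x y) = (n:ℝ) - p := by
      calc (∑ x : Fin n, ∑ y : Fin n, P x y * P x y)
          = ∑ x : Fin n, ∑ y : Fin n, P x y * P y x :=
            Finset.sum_congr rfl fun x _ => Finset.sum_congr rfl fun y _ => by rw [hs x y]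
        _ = (n:ℝ) - p := htrPP
    have e4 : (∑ x : Fin n, ν4 * (P x x * P x x)) = ν4 * (P ⊙ P).trace := by
      rw [← Finset.mul_sum, hhad]
    rw [e1, e2, htrPP, e4]; ring
  rw [show (fun ω => (1 / (n : ℝ)) * (∑ i, εhat i ω ^ 2) ^ 2)
      = fun ω => (1 / (n : ℝ)) * ((∑ i, εhat i ω ^ 2) ^ 2) from rfl,
    integral_const_mul, hmain, hfinal]
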